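/- Let F be a finite field and M, M' ∈ F^{k×n} such that wt(uM) = wt(uM') for all u ∈ F^k. Then M and M' are monomially equivalent: M' = MPR for some permutation matrix P ∈ GL_n(F) and nonsingular diagonal matrix R ∈ GL_n(F). -/

import Mathlib

open Polynomial Matrix
open scoped Classical

/-- Embedding of polynomials into formal Laurent series. -/
noncomputable def polyToLS (F : Type*) [Field F] : Polynomial F →+* LaurentSeries F :=
  (HahnSeries.ofPowerSeries ℤ F).comp Polynomial.coeToPowerSeries.ringHom

/-- The convolutional code generated by `G`: all `u·G` with `u` a Laurent-series row vector. -/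
noncomputable def convCode {F : Type*} [Field F] {k n : ℕ}
    (G : Matrix (Fin k) (Fin n) (Polynomial F)) : Set (Fin n → LaurentSeries F) :=
  {v | ∃ u : Fin k → LaurentSeries F, v = Matrix.vecMul u (G.map (polyToLS F))}

/-- `G` is basic: it has a polynomial right inverse. -/
def IsBasic {F : Type*} [Field F] {k n : ℕ} (G : Matrix (Fin k) (Fin n) (Polynomial F)) : Prop :=
  ∃ H : Matrix (Fin n) (Fin k) (Polynomial F), G * H = 1

/-- The overall constraint length: maximal degree of a (full-size) `k`-minor of `G`. -/
noncomputable def ocl {F : Type*} [Field F] {k n : ℕ}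
    (G : Matrix (Fin k) (Fin n) (Polynomial F)) : ℕ :=
  Finset.univ.sup fun f : Fin k ↪ Fin n => ((G.submatrix id f).det).natDegree

/-- The degree of the `i`-th row of `G` (in `WithBot ℕ`, so `deg 0 = ⊥`). -/
noncomputable def rowDeg {F : Type*} [Field F] {k n : ℕ}
    (G : Matrix (Fin k) (Fin n) (Polynomial F)) (i : Fin k) : WithBot ℕ :=
  Finset.univ.sup fun j => (G i j).degree

/-- The state-index set of the controller canonical form for row degrees `γ`. -/
abbrev StateIdx {k : ℕ} (γ : Fin k → ℕ) := Σ i : Fin k, Fin (γ i)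

/-- State matrix `A` of the controller canonical form (block diagonal nilpotent shifts). -/
def ccfA (F : Type*) [Field F] {k : ℕ} (γ : Fin k → ℕ) :
    Matrix (StateIdx γ) (StateIdx γ) F :=
  fun s t => if s.1 = t.1 ∧ (t.2 : ℕ) = (s.2 : ℕ) + 1 then 1 else 0

/-- Input matrix `B` of the controller canonical form. -/
def ccfB (F : Type*) [Field F] {k : ℕ} (γ : Fin k → ℕ) :
    Matrix (Fin k) (StateIdx γ) F :=
  fun i s => if s.1 = i ∧ (s.2 : ℕ) = 0 then 1 else 0

/-- Output matrix `C` of the controller canonical form: higher coefficient rows of `G`. -/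
noncomputable def ccfC {F : Type*} [Field F] {k n : ℕ} (γ : Fin k → ℕ)
    (G : Matrix (Fin k) (Fin n) (Polynomial F)) : Matrix (StateIdx γ) (Fin n) F :=
  fun s j => (G s.1 j).coeff ((s.2 : ℕ) + 1)

/-- Feedthrough matrix `D`: the constant coefficient matrix of `G`. -/
noncomputable def ccfD {F : Type*} [Field F] {k n : ℕ}
    (G : Matrix (Fin k) (Fin n) (Polynomial F)) : Matrix (Fin k) (Fin n) F :=
  fun i j => (G i j).coeff 0

/-- Hamming weight of a vector. -/
noncomputable def hamWt {F : Type*} [Field F] {ι : Type*} (v : ι → F) : ℕ :=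
  Nat.card {j : ι // v j ≠ 0}




lemma aux_card_ker {F : Type*} [Field F] [Fintype F] {k : ℕ} {W : Type*}
    [AddCommGroup W] [Module F W] [Fintype W]
    (f : (Fin k → F) →ₗ[F] W) (hf : Function.Surjective f) :
    Nat.card {u : Fin k → F // f u = 0} * Nat.card W = (Fintype.card F) ^ k := by
  have h1 : Nat.card (Fin k → F)
      = Nat.card (LinearMap.ker f) * Nat.card ((Fin k → F) ⧸ LinearMap.ker f) :=
    Submodule.card_eq_card_quotient_mul_card _
  have h2 : Nat.card ((Fin k → F) ⧸ LinearMap.ker f) = Nat.card W := by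
    rw [Nat.card_congr f.quotKerEquivRange.toEquiv]
    rw [LinearMap.range_eq_top.mpr hf]
    exact Nat.card_congr Submodule.topEquiv.toEquiv
  have h3 : Nat.card (LinearMap.ker f) = Nat.card {u : Fin k → F // f u = 0} :=
    Nat.card_congr (Equiv.subtypeEquivRight (fun u => LinearMap.mem_ker))
  have h4 : Nat.card (Fin k → F) = (Fintype.card F) ^ k := by
    rw [Nat.card_eq_fintype_card, Fintype.card_fun, Fintype.card_fin]
  rw [h2, h3, h4] at h1
  omega

noncomputable def dotL {F : Type*} [Field F] {k : ℕ} (c : Fin k → F) :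
    (Fin k → F) →ₗ[F] F where
  toFun u := u ⬝ᵥ c
  map_add' u v := add_dotProduct u v c
  map_smul' t u := smul_dotProduct t u c

lemma aux_card_perp {F : Type*} [Field F] [Fintype F] {k : ℕ} {c : Fin k → F} (hc : c ≠ 0) :
    Nat.card {u : Fin k → F // u ⬝ᵥ c = 0} = (Fintype.card F) ^ (k - 1) := by
  obtain ⟨i, hi⟩ : ∃ i, c i ≠ 0 := by
    by_contra hcon; push_neg at hcon; exact hc (funext hcon)
  have hsurj : Function.Surjective (dotL c) := by
    intro x
    refine ⟨Pi.single i (x * (c i)⁻¹), ?_⟩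
    show Pi.single i (x * (c i)⁻¹) ⬝ᵥ c = x
    rw [single_dotProduct]
    field_simp
  have hcard := aux_card_ker (dotL c) hsurj
  have hk : 1 ≤ k := Nat.one_le_iff_ne_zero.mpr (by rintro rfl; exact absurd i.isLt (by omega))
  have hq : 0 < Fintype.card F := Fintype.card_pos
  have hpow : (Fintype.card F) ^ k = (Fintype.card F) ^ (k - 1) * Fintype.card F := by
    rw [← pow_succ]; congr 1; omega
  have hsub : Nat.card {u : Fin k → F // (dotL c) u = 0}
      = Nat.card {u : Fin k → F // u ⬝ᵥ c = 0} := rfl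
  rw [hsub, hpow, Nat.card_eq_fintype_card (α := F)] at hcard
  exact Nat.eq_of_mul_eq_mul_right hq hcard

noncomputable def dotL2 {F : Type*} [Field F] {k : ℕ} (c c' : Fin k → F) :
    (Fin k → F) →ₗ[F] (F × F) where
  toFun u := (u ⬝ᵥ c, u ⬝ᵥ c')
  map_add' u v := by simp [add_dotProduct, Prod.ext_iff]
  map_smul' t u := by simp [smul_dotProduct, Prod.ext_iff, smul_eq_mul]

lemma aux_card_perp2 {F : Type*} [Field F] [Fintype F] {k : ℕ} {c c' : Fin k → F}
    (hc : c ≠ 0) (h : ¬ ∃ t : F, c' = t • c) :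
    2 ≤ k ∧
    Nat.card {u : Fin k → F // u ⬝ᵥ c = 0 ∧ u ⬝ᵥ c' = 0}
      = (Fintype.card F) ^ (k - 2) := by
  obtain ⟨i, hi⟩ : ∃ i, c i ≠ 0 := by
    by_contra hcon; push_neg at hcon; exact hc (funext hcon)
  set s : F := c' i * (c i)⁻¹ with hs
  set c'' : Fin k → F := c' - s • c with hc''
  have hc''ne : c'' ≠ 0 := by
    intro h0
    exact h ⟨s, by rw [← sub_eq_zero]; exact h0⟩
  obtain ⟨i', hi'⟩ : ∃ i', c'' i' ≠ 0 := by
    by_contra hcon; push_neg at hcon; exact hc''ne (funext hcon)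
  have hci : c'' i = 0 := by
    simp only [hc'', Pi.sub_apply, Pi.smul_apply, smul_eq_mul, hs]
    field_simp
    ring
  have hne : i' ≠ i := fun hh => hi' (hh ▸ hci)
  have hk2 : 2 ≤ k := by
    have h1 : 1 < Fintype.card (Fin k) := Fintype.one_lt_card_iff.mpr ⟨i, i', Ne.symm hne⟩
    simp at h1; omega
  set D : F := c i * c' i' - c i' * c' i with hD
  have hDne : D ≠ 0 := by
    have hmul : c i * c'' i' = D := by
      simp only [hc'', Pi.sub_apply, Pi.smul_apply, smul_eq_mul, hs, hD]
      field_simp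
    rw [← hmul]
    exact mul_ne_zero hi hi'
  have hsurj : Function.Surjective (dotL2 c c') := by
    rintro ⟨x, y⟩
    refine ⟨Pi.single i ((x * c' i' - y * c i') / D) + Pi.single i' ((y * c i - x * c' i) / D), ?_⟩
    have e1 : ∀ v : Fin k → F,
        (Pi.single i ((x * c' i' - y * c i') / D) + Pi.single i' ((y * c i - x * c' i) / D)) ⬝ᵥ v
        = (x * c' i' - y * c i') / D * v i + (y * c i - x * c' i) / D * v i' := by
      intro v
      rw [add_dotProduct, single_dotProduct, single_dotProduct]
    show (_ ⬝ᵥ c, _ ⬝ᵥ c') = (x, y)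
    rw [e1 c, e1 c']
    simp only [Prod.mk.injEq]
    constructor <;> (field_simp; ring)
  have hcard := aux_card_ker (dotL2 c c') hsurj
  have hWcard : Nat.card (F × F) = Fintype.card F ^ 2 := by
    rw [Nat.card_eq_fintype_card, Fintype.card_prod]; ring
  have hsub : Nat.card {u : Fin k → F // (dotL2 c c') u = 0}
      = Nat.card {u : Fin k → F // u ⬝ᵥ c = 0 ∧ u ⬝ᵥ c' = 0} :=
    Nat.card_congr (Equiv.subtypeEquivRight (fun u => Prod.mk_eq_zero))
  have hpow : (Fintype.card F) ^ k = (Fintype.card F) ^ (k - 2) * (Fintype.card F) ^ 2 := by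
    rw [← pow_add]; congr 1; omega
  rw [hWcard, hpow, hsub] at hcard
  have hq : 0 < Fintype.card F := Fintype.card_pos
  exact ⟨hk2, Nat.eq_of_mul_eq_mul_right (by positivity) hcard⟩

lemma aux_inj {K1 K2 n a b : ℕ} (hK : K2 < K1) (ha : a ≤ n) (hb : b ≤ n)
    (h : a * K1 + (n - a) * K2 = b * K1 + (n - b) * K2) : a = b := by
  zify [ha, hb] at h
  have h2 : ((a : ℤ) - b) * ((K1 : ℤ) - K2) = 0 := by linear_combination h
  rcases mul_eq_zero.mp h2 with h3 | h3
  · exact_mod_cast sub_eq_zero.mp h3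
  · exfalso
    have : (K2 : ℤ) < K1 := by exact_mod_cast hK
    omega

lemma aux_natcard_sum {α : Type*} [Fintype α] (p : α → Prop) :
    Nat.card {a // p a} = ∑ a : α, (if p a then 1 else 0) := by
  classical
  rw [Nat.card_eq_fintype_card, Fintype.card_subtype, Finset.card_filter]

lemma aux_card_le {n : ℕ} (p : Fin n → Prop) : Nat.card {j // p j} ≤ n := by
  classical
  rw [Nat.card_eq_fintype_card]
  calc Fintype.card {j // p j} ≤ Fintype.card (Fin n) := Fintype.card_subtype_le p
    _ = n := Fintype.card_fin n

lemma aux_compl {n : ℕ} (p : Fin n → Prop) :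
    Nat.card {j // p j} + Nat.card {j // ¬ p j} = n := by
  classical
  rw [Nat.card_eq_fintype_card, Nat.card_eq_fintype_card, Fintype.card_subtype_compl]
  have h1 : Fintype.card {j // p j} ≤ Fintype.card (Fin n) := Fintype.card_subtype_le p
  have h2 : Fintype.card (Fin n) = n := Fintype.card_fin n
  omega

lemma aux_split {n : ℕ} (g : Fin n → ℕ) (p : Fin n → Prop) {K1 K2 : ℕ}
    (h1 : ∀ j, p j → g j = K1) (h2 : ∀ j, ¬ p j → g j = K2) :
    ∑ j, g j = Nat.card {j // p j} * K1 + (n - Nat.card {j // p j}) * K2 := by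
  classical
  rw [Nat.card_eq_fintype_card, Fintype.card_subtype]
  rw [← Finset.sum_filter_add_sum_filter_not Finset.univ p]
  have e1 : ∑ j ∈ Finset.univ.filter p, g j = (Finset.univ.filter p).card * K1 := by
    rw [Finset.sum_congr rfl (fun j hj => h1 j (Finset.mem_filter.mp hj).2),
      Finset.sum_const, smul_eq_mul]
  have e2 : ∑ j ∈ Finset.univ.filter (fun j => ¬ p j), g j
      = (n - (Finset.univ.filter p).card) * K2 := by
    rw [Finset.sum_congr rfl (fun j hj => h2 j (Finset.mem_filter.mp hj).2),
      Finset.sum_const, smul_eq_mul]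
    congr 1
    have := Finset.card_filter_add_card_filter_not (s := Finset.univ) p
    simp only [Finset.card_univ, Fintype.card_fin] at this
    omega
  rw [e1, e2]

lemma aux_cardsplit {n : ℕ} (P Z : Fin n → Prop) (hZP : ∀ j, Z j → P j) :
    Nat.card {j // P j ∧ ¬ Z j} + Nat.card {j // Z j} = Nat.card {j // P j} := by
  classical
  have e1 : Nat.card {j // Z j} = Nat.card {j : Fin n // P j ∧ Z j} :=
    Nat.card_congr (Equiv.subtypeEquivRight fun j => ⟨fun h => ⟨hZP j h, h⟩, And.right⟩)
  rw [e1, Nat.card_eq_fintype_card, Nat.card_eq_fintype_card, Nat.card_eq_fintype_card,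
    Fintype.card_subtype, Fintype.card_subtype, Fintype.card_subtype,
    ← Finset.filter_filter, ← Finset.filter_filter]
  rw [add_comm]
  exact Finset.card_filter_add_card_filter_not (fun j => Z j)

lemma aux_key {F : Type*} [Field F] [Fintype F] {k n : ℕ}
    (col : Fin n → Fin k → F) (c : Fin k → F) :
    ∑ j, Nat.card {u : Fin k → F // u ⬝ᵥ c = 0 ∧ u ⬝ᵥ col j = 0}
      = ∑ w : {v : Fin k → F // v ⬝ᵥ c = 0},
          Nat.card {j : Fin n // (w : Fin k → F) ⬝ᵥ col j = 0} := by
  classical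
  have e1 : ∀ j, Nat.card {u : Fin k → F // u ⬝ᵥ c = 0 ∧ u ⬝ᵥ col j = 0}
      = ∑ w : {v : Fin k → F // v ⬝ᵥ c = 0},
          (if (w : Fin k → F) ⬝ᵥ col j = 0 then 1 else 0) := by
    intro j
    rw [← aux_natcard_sum (fun w : {v : Fin k → F // v ⬝ᵥ c = 0} => (w : Fin k → F) ⬝ᵥ col j = 0)]
    exact Nat.card_congr (Equiv.subtypeSubtypeEquivSubtypeInter
      (fun v : Fin k → F => v ⬝ᵥ c = 0) (fun v => v ⬝ᵥ col j = 0)).symm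
  calc ∑ j, Nat.card {u : Fin k → F // u ⬝ᵥ c = 0 ∧ u ⬝ᵥ col j = 0}
      = ∑ j, ∑ w : {v : Fin k → F // v ⬝ᵥ c = 0},
          (if (w : Fin k → F) ⬝ᵥ col j = 0 then 1 else 0) :=
        Finset.sum_congr rfl fun j _ => e1 j
    _ = ∑ w : {v : Fin k → F // v ⬝ᵥ c = 0}, ∑ j,
          (if (w : Fin k → F) ⬝ᵥ col j = 0 then 1 else 0) := Finset.sum_comm
    _ = _ := Finset.sum_congr rfl fun w _ =>
        (aux_natcard_sum (fun j : Fin n => (w : Fin k → F) ⬝ᵥ col j = 0)).symm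

lemma aux_NA {F : Type*} [Field F] [Fintype F] {k n : ℕ}
    (col : Fin n → Fin k → F) (c : Fin k → F) (hc : c ≠ 0)
    (j : Fin n) (hj : ∃ t : F, col j = t • c) :
    Nat.card {u : Fin k → F // u ⬝ᵥ c = 0 ∧ u ⬝ᵥ col j = 0}
      = (Fintype.card F) ^ (k-1) := by
  obtain ⟨t, ht⟩ := hj
  rw [← aux_card_perp hc]
  refine Nat.card_congr (Equiv.subtypeEquivRight fun u => ?_)
  constructor
  · exact fun hh => hh.1
  · intro hh
    refine ⟨hh, ?_⟩
    rw [ht, dotProduct_smul, hh, smul_zero]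

lemma aux_Acard {F : Type*} [Field F] [Fintype F] {k n : ℕ}
    (colM colM' : Fin n → Fin k → F)
    (hZ : ∀ u : Fin k → F,
      Nat.card {j : Fin n // u ⬝ᵥ colM j = 0} = Nat.card {j : Fin n // u ⬝ᵥ colM' j = 0})
    (c : Fin k → F) (hc : c ≠ 0) :
    Nat.card {j : Fin n // ∃ t : F, colM j = t • c}
      = Nat.card {j : Fin n // ∃ t : F, colM' j = t • c} := by
  set q := Fintype.card F with hq
  have hq1 : 1 < q := Fintype.one_lt_card
  by_cases hex : (∀ j, ∃ t : F, colM j = t • c) ∧ (∀ j, ∃ t : F, colM' j = t • c)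
  · have e1 : Nat.card {j : Fin n // ∃ t : F, colM j = t • c} = n := by
      rw [Nat.card_congr (Equiv.subtypeUnivEquiv hex.1)]; simp
    have e2 : Nat.card {j : Fin n // ∃ t : F, colM' j = t • c} = n := by
      rw [Nat.card_congr (Equiv.subtypeUnivEquiv hex.2)]; simp
    rw [e1, e2]
  · have hk2 : 2 ≤ k := by
      rw [not_and_or] at hex
      rcases hex with hex | hex <;> obtain ⟨j0, hj0⟩ := not_forall.mp hex
      · exact (aux_card_perp2 hc hj0).1
      · exact (aux_card_perp2 hc hj0).1
    have hKK : q ^ (k-2) < q ^ (k-1) := Nat.pow_lt_pow_right hq1 (by omega)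
    have hsumM := aux_split
      (fun j => Nat.card {u : Fin k → F // u ⬝ᵥ c = 0 ∧ u ⬝ᵥ colM j = 0})
      (fun j => ∃ t : F, colM j = t • c) (K1 := q^(k-1)) (K2 := q^(k-2))
      (fun j hj => aux_NA colM c hc j hj) (fun j hj => (aux_card_perp2 hc hj).2)
    have hsumM' := aux_split
      (fun j => Nat.card {u : Fin k → F // u ⬝ᵥ c = 0 ∧ u ⬝ᵥ colM' j = 0})
      (fun j => ∃ t : F, colM' j = t • c) (K1 := q^(k-1)) (K2 := q^(k-2))
      (fun j hj => aux_NA colM' c hc j hj) (fun j hj => (aux_card_perp2 hc hj).2)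
    have hsums : ∑ j, Nat.card {u : Fin k → F // u ⬝ᵥ c = 0 ∧ u ⬝ᵥ colM j = 0}
        = ∑ j, Nat.card {u : Fin k → F // u ⬝ᵥ c = 0 ∧ u ⬝ᵥ colM' j = 0} := by
      rw [aux_key colM c, aux_key colM' c]
      exact Finset.sum_congr rfl fun w _ => hZ w.1
    exact aux_inj hKK (aux_card_le _) (aux_card_le _)
      (hsumM.symm.trans (hsums.trans hsumM'))

lemma aux_Bcard {F : Type*} [Field F] [Fintype F] {k n : ℕ} (hk : 0 < k)
    (colM colM' : Fin n → Fin k → F)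
    (hZ : ∀ u : Fin k → F,
      Nat.card {j : Fin n // u ⬝ᵥ colM j = 0} = Nat.card {j : Fin n // u ⬝ᵥ colM' j = 0}) :
    Nat.card {j : Fin n // colM j = 0} = Nat.card {j : Fin n // colM' j = 0} := by
  set q := Fintype.card F with hq
  have hq1 : 1 < q := Fintype.one_lt_card
  have hBval1 : ∀ (col : Fin n → Fin k → F) (j : Fin n), col j = 0 →
      Nat.card {u : Fin k → F // u ⬝ᵥ (0 : Fin k → F) = 0 ∧ u ⬝ᵥ col j = 0} = q ^ k := by
    intro col j hj
    have e : Nat.card {u : Fin k → F // u ⬝ᵥ (0 : Fin k → F) = 0 ∧ u ⬝ᵥ col j = 0}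
        = Nat.card (Fin k → F) := by
      refine Nat.card_congr (Equiv.subtypeUnivEquiv fun u => ?_)
      rw [hj]
      simp
    rw [e, Nat.card_eq_fintype_card, Fintype.card_fun, Fintype.card_fin]
  have hBval2 : ∀ (col : Fin n → Fin k → F) (j : Fin n), ¬ col j = 0 →
      Nat.card {u : Fin k → F // u ⬝ᵥ (0 : Fin k → F) = 0 ∧ u ⬝ᵥ col j = 0} = q ^ (k-1) := by
    intro col j hj
    rw [← aux_card_perp hj]
    refine Nat.card_congr (Equiv.subtypeEquivRight fun u => ?_)
    simp
  have hKK : q ^ (k-1) < q ^ k := Nat.pow_lt_pow_right hq1 (by omega)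
  have hsumM := aux_split
    (fun j => Nat.card {u : Fin k → F // u ⬝ᵥ (0 : Fin k → F) = 0 ∧ u ⬝ᵥ colM j = 0})
    (fun j => colM j = 0) (K1 := q^k) (K2 := q^(k-1))
    (fun j hj => hBval1 colM j hj) (fun j hj => hBval2 colM j hj)
  have hsumM' := aux_split
    (fun j => Nat.card {u : Fin k → F // u ⬝ᵥ (0 : Fin k → F) = 0 ∧ u ⬝ᵥ colM' j = 0})
    (fun j => colM' j = 0) (K1 := q^k) (K2 := q^(k-1))
    (fun j hj => hBval1 colM' j hj) (fun j hj => hBval2 colM' j hj)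
  have hsums : ∑ j, Nat.card {u : Fin k → F // u ⬝ᵥ (0 : Fin k → F) = 0 ∧ u ⬝ᵥ colM j = 0}
      = ∑ j, Nat.card {u : Fin k → F // u ⬝ᵥ (0 : Fin k → F) = 0 ∧ u ⬝ᵥ colM' j = 0} := by
    rw [aux_key colM 0, aux_key colM' 0]
    exact Finset.sum_congr rfl fun w _ => hZ w.1
  exact aux_inj hKK (aux_card_le _) (aux_card_le _)
    (hsumM.symm.trans (hsums.trans hsumM'))

/-- proportionality setoid -/
def propSetoid (F : Type*) [Field F] (k : ℕ) : Setoid (Fin k → F) where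
  r a b := ∃ t : Fˣ, a = t • b
  iseqv := by
    constructor
    · exact fun a => ⟨1, by simp⟩
    · rintro a b ⟨t, rfl⟩
      exact ⟨t⁻¹, by simp [smul_smul]⟩
    · rintro a b c ⟨t, rfl⟩ ⟨s, rfl⟩
      exact ⟨t * s, by simp [smul_smul]⟩

lemma aux_fib {F : Type*} [Field F] [Fintype F] {k n : ℕ} (hk : 0 < k)
    (colM colM' : Fin n → Fin k → F)
    (hZ : ∀ u : Fin k → F,
      Nat.card {j : Fin n // u ⬝ᵥ colM j = 0} = Nat.card {j : Fin n // u ⬝ᵥ colM' j = 0})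
    (y : Quotient (propSetoid F k)) :
    Nat.card {j : Fin n // Quotient.mk (propSetoid F k) (colM j) = y}
      = Nat.card {j : Fin n // Quotient.mk (propSetoid F k) (colM' j) = y} := by
  obtain ⟨c, rfl⟩ := Quotient.exists_rep y
  have hmem : ∀ a : Fin k → F,
      (Quotient.mk (propSetoid F k) a = Quotient.mk (propSetoid F k) c)
      ↔ ∃ t : Fˣ, a = t • c :=
    fun a => ⟨fun hh => Quotient.exact hh, fun hh => Quotient.sound hh⟩
  by_cases hc : c = 0
  · subst hc
    have hiff0 : ∀ a : Fin k → F, ((∃ t : Fˣ, a = t • (0 : Fin k → F)) ↔ a = 0) := by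
      intro a
      constructor
      · rintro ⟨t, rfl⟩; simp
      · intro ha; exact ⟨1, by simp [ha]⟩
    have e : ∀ col : Fin n → Fin k → F,
        Nat.card {j : Fin n // Quotient.mk (propSetoid F k) (col j)
          = Quotient.mk (propSetoid F k) 0}
        = Nat.card {j : Fin n // col j = 0} := by
      intro col
      exact Nat.card_congr (Equiv.subtypeEquivRight fun j => by rw [hmem, hiff0])
    rw [e colM, e colM']
    exact aux_Bcard hk colM colM' hZ
  · have hiff : ∀ a : Fin k → F,
        ((∃ t : Fˣ, a = t • c) ↔ ((∃ t : F, a = t • c) ∧ ¬ a = 0)) := by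
      intro a
      constructor
      · rintro ⟨t, rfl⟩
        refine ⟨⟨(t : F), by rw [Units.smul_def]⟩, fun h0 => hc ?_⟩
        calc c = t⁻¹ • (t • c) := (inv_smul_smul t c).symm
          _ = 0 := by rw [h0, smul_zero]
      · rintro ⟨⟨t, rfl⟩, hne⟩
        have ht : t ≠ 0 := by rintro rfl; simp at hne
        exact ⟨Units.mk0 t ht, rfl⟩
    have e : ∀ col : Fin n → Fin k → F,
        Nat.card {j : Fin n // Quotient.mk (propSetoid F k) (col j)
          = Quotient.mk (propSetoid F k) c}
        = Nat.card {j : Fin n // (∃ t : F, col j = t • c) ∧ ¬ col j = 0} := by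
      intro col
      exact Nat.card_congr (Equiv.subtypeEquivRight fun j => by rw [hmem, hiff])
    rw [e colM, e colM']
    have s1 := aux_cardsplit (fun j => ∃ t : F, colM j = t • c) (fun j => colM j = 0)
      (fun j hz => ⟨0, by rw [hz, zero_smul]⟩)
    have s2 := aux_cardsplit (fun j => ∃ t : F, colM' j = t • c) (fun j => colM' j = 0)
      (fun j hz => ⟨0, by rw [hz, zero_smul]⟩)
    beta_reduce at s1 s2
    have hA := aux_Acard colM colM' hZ c hc
    have hB := aux_Bcard hk colM colM' hZ
    omega

set_option maxHeartbeats 1000000 in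
theorem stmt17 {F : Type*} [Field F] [Fintype F] {k n : ℕ}
    (M M' : Matrix (Fin k) (Fin n) F)
    (h : ∀ u : Fin k → F, hamWt (Matrix.vecMul u M) = hamWt (Matrix.vecMul u M')) :
    ∃ P R : Matrix (Fin n) (Fin n) F,
      (∃ σ : Equiv.Perm (Fin n), P = Matrix.of fun i j => if σ i = j then 1 else 0) ∧
      (∃ d : Fin n → F, (∀ j, d j ≠ 0) ∧ R = Matrix.diagonal d) ∧
      M' = M * P * R := by
  classical
  rcases Nat.eq_zero_or_pos k with hk0 | hkpos
  · subst hk0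
    refine ⟨Matrix.of fun i j => if (Equiv.refl (Fin n)) i = j then 1 else 0,
      Matrix.diagonal (fun _ => (1:F)), ⟨Equiv.refl _, rfl⟩,
      ⟨fun _ => 1, fun _ => one_ne_zero, rfl⟩, ?_⟩
    ext i j
    exact i.elim0
  set colM : Fin n → (Fin k → F) := fun j i => M i j with hcolM
  set colM' : Fin n → (Fin k → F) := fun j i => M' i j with hcolM'
  have hZ : ∀ u : Fin k → F,
      Nat.card {j : Fin n // u ⬝ᵥ colM j = 0} = Nat.card {j : Fin n // u ⬝ᵥ colM' j = 0} := by
    intro u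
    have h1 : hamWt (Matrix.vecMul u M) = Nat.card {j : Fin n // ¬ u ⬝ᵥ colM j = 0} := rfl
    have h2 : hamWt (Matrix.vecMul u M') = Nat.card {j : Fin n // ¬ u ⬝ᵥ colM' j = 0} := rfl
    have c1 := aux_compl (fun j : Fin n => u ⬝ᵥ colM j = 0)
    have c2 := aux_compl (fun j : Fin n => u ⬝ᵥ colM' j = 0)
    beta_reduce at c1 c2
    have h3 := h u
    rw [h1, h2] at h3
    omega
  have hfib' : ∀ y : Quotient (propSetoid F k),
      Fintype.card {j : Fin n // Quotient.mk (propSetoid F k) (colM' j) = y}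
      = Fintype.card {j : Fin n // Quotient.mk (propSetoid F k) (colM j) = y} := by
    intro y
    rw [← Nat.card_eq_fintype_card, ← Nat.card_eq_fintype_card]
    exact (aux_fib hkpos colM colM' hZ y).symm
  obtain ⟨e, he⟩ : ∃ e : Fin n ≃ Fin n, ∀ j, Quotient.mk (propSetoid F k) (colM (e j))
      = Quotient.mk (propSetoid F k) (colM' j) :=
    ⟨Equiv.ofFiberEquiv
      (f := fun j => Quotient.mk (propSetoid F k) (colM' j))
      (g := fun j => Quotient.mk (propSetoid F k) (colM j))
      (fun y => Fintype.equivOfCardEq (hfib' y)),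
     fun j => Equiv.ofFiberEquiv_map (fun y => Fintype.equivOfCardEq (hfib' y)) j⟩
  have hrel : ∀ j, ∃ t : Fˣ, colM (e j) = t • colM' j := fun j => Quotient.exact (he j)
  choose t ht using hrel
  refine ⟨Matrix.of fun i j => if e.symm i = j then 1 else 0,
    Matrix.diagonal (fun j => (((t j)⁻¹ : Fˣ) : F)), ⟨e.symm, rfl⟩,
    ⟨fun j => (((t j)⁻¹ : Fˣ) : F), fun j => Units.ne_zero _, rfl⟩, ?_⟩
  ext i j
  rw [Matrix.mul_diagonal]
  have hMP : (M * Matrix.of fun i j => if e.symm i = j then (1:F) else 0) i j = M i (e j) := by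
    rw [Matrix.mul_apply]
    have hcongr : ∀ a : Fin n,
        M i a * (Matrix.of fun i j => if e.symm i = j then (1:F) else 0) a j
        = if a = e j then M i a else 0 := by
      intro a
      simp only [Matrix.of_apply, Equiv.symm_apply_eq, mul_ite, mul_one, mul_zero]
    rw [Finset.sum_congr rfl fun a _ => hcongr a]
    simp [Finset.sum_ite_eq']
  rw [hMP]
  have h1 : M i (e j) = (t j : F) * M' i j := by
    have := congrFun (ht j) i
    simpa [Units.smul_def] using this
  rw [h1, mul_comm ((t j : F)) (M' i j), mul_assoc]
  simp [Units.mul_inv]
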